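/- Let Σ be a generable set of d-dimensional nonsingular cones in ℤ^d and let B be a d×2 integer matrix which is not Σ-good. Then there exists a series of B-good blow-ups Σ̃ ⇝ Σ such that B is Σ̃-good. -/

import Mathlib

open Finset

/-- The cone in `ℝ^d` generated (over the nonnegative reals) by a finite set of
integer vectors. -/
def coneOf {d : ℕ} (S : Finset (Fin d → ℤ)) : Set (Fin d → ℝ) :=
  {x | ∃ c : (Fin d → ℤ) → ℝ, (∀ v, 0 ≤ c v) ∧ x = ∑ v ∈ S, c v • (fun l => (v l : ℝ))}

/-- `S` is the set of primitive edge generators of a `d`-dimensional nonsingular cone in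
`ℤ^d`, i.e. `S` consists of `d` vectors forming a `ℤ`-basis of `ℤ^d`.  We identify such a
cone with its finite set of edge generators, an edge with its unique primitive generator. -/
def IsNsCone (d : ℕ) (S : Finset (Fin d → ℤ)) : Prop :=
  S.card = d ∧ Submodule.span ℤ (S : Set (Fin d → ℤ)) = ⊤

/-- The set of edges `E(Σ)` of a finite set of cones, each cone being given by its finite
set of edge generators. -/
def edges {d : ℕ} (F : Finset (Finset (Fin d → ℤ))) : Finset (Fin d → ℤ) :=
  F.biUnion id

/-- A finite set of (`d`-dimensional nonsingular) cones is generable if the collection of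
all the faces of all its cones is a fan: the intersection of any two such faces is again a
face of both.  A face of a cone corresponds to a subset of its set of edge generators. -/
def IsGenerable {d : ℕ} (F : Finset (Finset (Fin d → ℤ))) : Prop :=
  ∀ σ ∈ F, ∀ σ' ∈ F, ∀ s ⊆ σ, ∀ s' ⊆ σ',
    (∃ t ⊆ σ, coneOf s ∩ coneOf s' = coneOf t) ∧
    (∃ t' ⊆ σ', coneOf s ∩ coneOf s' = coneOf t')

/-- The standard blow-up of `F` along the edges `ε₁, ε₂`: every cone `σ` containing both
`ε₁` and `ε₂` is replaced by the two cones `σ(ε₁)` and `σ(ε₂)` (where `σ(εᵢ)` is generated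
by `ε₁ + ε₂` together with the edges of `σ` other than `ε_j`, `{i,j} = {1,2}`), and all
other cones are kept. -/
def blowUp {d : ℕ} (F : Finset (Finset (Fin d → ℤ))) (ε₁ ε₂ : Fin d → ℤ) :
    Finset (Finset (Fin d → ℤ)) :=
  F.filter (fun σ => ¬(ε₁ ∈ σ ∧ ε₂ ∈ σ)) ∪
    (F.filter (fun σ => ε₁ ∈ σ ∧ ε₂ ∈ σ)).biUnion
      (fun σ => {insert (ε₁ + ε₂) (σ.erase ε₂), insert (ε₁ + ε₂) (σ.erase ε₁)})

/-- For a `d × n` integer matrix `B` and an edge with primitive generator `ε`,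
`bEdge B ε i = Σ_j ε_j b_{j i}`. -/
def bEdge {d n : ℕ} (B : Matrix (Fin d) (Fin n) ℤ) (ε : Fin d → ℤ) (i : Fin n) : ℤ :=
  ∑ j, ε j * B j i

/-- `B` is `σ`-good: there is a permutation `γ` of the column indices such that
`b_{ε γ(1)} ≤ ⋯ ≤ b_{ε γ(n)}` for every edge `ε` of `σ`. -/
def GoodCone {d n : ℕ} (B : Matrix (Fin d) (Fin n) ℤ) (σ : Finset (Fin d → ℤ)) : Prop :=
  ∃ γ : Equiv.Perm (Fin n), ∀ ε ∈ σ, Monotone fun i => bEdge B ε (γ i)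

/-- `B` is `Σ`-good: it is `σ`-good for every `σ ∈ Σ`. -/
def GoodFan {d n : ℕ} (B : Matrix (Fin d) (Fin n) ℤ) (F : Finset (Finset (Fin d → ℤ))) :
    Prop :=
  ∀ σ ∈ F, GoodCone B σ

open scoped Classical

/-- For a `d × 2` matrix `B`, `deltaB B ε = b_{ε 1} - b_{ε 2}`. -/
def deltaB {d : ℕ} (B : Matrix (Fin d) (Fin 2) ℤ) (ε : Fin d → ℤ) : ℤ :=
  bEdge B ε 0 - bEdge B ε 1

/-- `Σ_bad(B)`: the cones of `Σ` for which `B` is not good. -/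
noncomputable def badCones {d : ℕ} (B : Matrix (Fin d) (Fin 2) ℤ)
    (F : Finset (Finset (Fin d → ℤ))) : Finset (Finset (Fin d → ℤ)) :=
  F.filter (fun σ => ¬ GoodCone B σ)

/-- `μ_B(Σ) = max { |b_{ε1} - b_{ε2}| : ε ∈ E(Σ_bad(B)) }`, and `0` if `Σ_bad(B) = ∅`. -/
noncomputable def muB {d : ℕ} (B : Matrix (Fin d) (Fin 2) ℤ)
    (F : Finset (Finset (Fin d → ℤ))) : ℕ :=
  (edges (badCones B F)).sup fun ε => (deltaB B ε).natAbs

/-- `E_B(Σ)`: the edges of `Σ_bad(B)` realizing the maximum `μ_B(Σ)`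
(empty if `Σ_bad(B) = ∅`). -/
noncomputable def EB {d : ℕ} (B : Matrix (Fin d) (Fin 2) ℤ)
    (F : Finset (Finset (Fin d → ℤ))) : Finset (Fin d → ℤ) :=
  (edges (badCones B F)).filter fun ε => (deltaB B ε).natAbs = muB B F

/-- `E_B(Σ, ε) = {ε' ∈ E(Σ_bad(B)) ∩ E(Σ(ε)) : (b_{ε1} - b_{ε2})(b_{ε'1} - b_{ε'2}) < 0}`. -/
noncomputable def EBe {d : ℕ} (B : Matrix (Fin d) (Fin 2) ℤ)
    (F : Finset (Finset (Fin d → ℤ))) (ε : Fin d → ℤ) : Finset (Fin d → ℤ) :=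
  ((edges (badCones B F)) ∩ edges (F.filter fun σ => ε ∈ σ)).filter
    fun ε' => deltaB B ε * deltaB B ε' < 0

/-- `ν_B(Σ) = Σ_{ε ∈ E_B(Σ)} #E_B(Σ, ε)`. -/
noncomputable def nuB {d : ℕ} (B : Matrix (Fin d) (Fin 2) ℤ)
    (F : Finset (Finset (Fin d → ℤ))) : ℕ :=
  ∑ ε ∈ EB B F, (EBe B F ε).card

/-- `F'` is a `B`-good standard blow-up of `F`: it is the standard blow-up of `F` along
some `ε₁ ∈ E_B(F)` and `ε₂ ∈ E_B(F, ε₁)` with `|b_{ε₂1} - b_{ε₂2}|` maximal among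
`E_B(F, ε₁)`. -/
noncomputable def IsBGoodBlowUp {d : ℕ} (B : Matrix (Fin d) (Fin 2) ℤ)
    (F F' : Finset (Finset (Fin d → ℤ))) : Prop :=
  ∃ ε₁ ε₂ : Fin d → ℤ,
    ε₁ ≠ ε₂ ∧ ε₁ ∈ edges F ∧ ε₂ ∈ edges F ∧ (∃ σ ∈ F, ε₁ ∈ σ ∧ ε₂ ∈ σ) ∧
    ε₁ ∈ EB B F ∧ ε₂ ∈ EBe B F ε₁ ∧
    (deltaB B ε₂).natAbs = (EBe B F ε₁).sup (fun ε => (deltaB B ε).natAbs) ∧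
    F' = blowUp F ε₁ ε₂

namespace Aux

variable {d : ℕ}

/-- the cast map ℤ^d → ℝ^d as a ℤ-linear map -/
def ic : (Fin d → ℤ) →ₗ[ℤ] (Fin d → ℝ) where
  toFun v := fun l => (v l : ℝ)
  map_add' u v := by funext l; push_cast; simp
  map_smul' k v := by funext l; push_cast; simp [zsmul_eq_mul]

lemma ic_def (v : Fin d → ℤ) : (ic v : Fin d → ℝ) = fun l => (v l : ℝ) := rfl

lemma ic_inj : Function.Injective (ic (d := d)) := by
  intro u v h
  funext l
  have : ((u l : ℝ)) = (v l : ℝ) := congrFun h l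
  exact_mod_cast this

lemma mem_coneOf {S : Finset (Fin d → ℤ)} {x : Fin d → ℝ} :
    x ∈ coneOf S ↔ ∃ c : (Fin d → ℤ) → ℝ, (∀ v, 0 ≤ c v) ∧ x = ∑ v ∈ S, c v • ic v :=
  Iff.rfl

lemma sum_indicator_smul {σ : Finset (Fin d → ℤ)} {a : Fin d → ℤ} (ha : a ∈ σ) (r : ℝ) :
    ∑ v ∈ σ, (if v = a then r else 0) • ic v = r • ic a := by
  rw [Finset.sum_eq_single a (fun w _ hw => by simp [hw]) (fun h => absurd ha h)]
  simp

lemma coneOf_mono {S T : Finset (Fin d → ℤ)} (h : S ⊆ T) : coneOf S ⊆ coneOf T := by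
  rintro x ⟨c, hc, rfl⟩
  rw [mem_coneOf]
  refine ⟨fun v => if v ∈ S then c v else 0, fun v => by dsimp; split <;> simp [hc], ?_⟩
  calc ∑ v ∈ S, c v • (fun l => ((v l : ℤ) : ℝ))
      = ∑ v ∈ S, (if v ∈ S then c v else 0) • ic v :=
        Finset.sum_congr rfl fun v hv => by rw [if_pos hv, ic_def]
    _ = ∑ v ∈ T, (if v ∈ S then c v else 0) • ic v :=
        Finset.sum_subset h (fun v _ hv => by rw [if_neg hv, zero_smul])

lemma ic_mem_coneOf {S : Finset (Fin d → ℤ)} {v : Fin d → ℤ} (hv : v ∈ S) :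
    (ic v : Fin d → ℝ) ∈ coneOf S := by
  rw [mem_coneOf]
  exact ⟨fun w => if w = v then 1 else 0, fun w => by dsimp; split <;> norm_num,
    by rw [sum_indicator_smul hv, one_smul]⟩

/-- unique (real) linear dependence: the coefficients of any vanishing combination on σ are 0.  -/
def Indep (σ : Finset (Fin d → ℤ)) : Prop :=
  ∀ f : (Fin d → ℤ) → ℝ, (∑ v ∈ σ, f v • ic v) = 0 → ∀ v ∈ σ, f v = 0

lemma coeff_eq {σ s t : Finset (Fin d → ℤ)} (hσ : Indep σ) (hs : s ⊆ σ) (ht : t ⊆ σ)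
    (f g : (Fin d → ℤ) → ℝ) (h : ∑ v ∈ s, f v • ic v = ∑ v ∈ t, g v • ic v) :
    ∀ v ∈ σ, (if v ∈ s then f v else 0) = (if v ∈ t then g v else 0) := by
  intro v hv
  have h0 : ∑ v ∈ σ, ((if v ∈ s then f v else 0) - (if v ∈ t then g v else 0)) • ic v = 0 := by
    have e1 : ∑ v ∈ σ, (if v ∈ s then f v else 0) • ic v = ∑ v ∈ s, f v • ic v := by
      rw [← Finset.sum_subset hs (fun v _ hv => by rw [if_neg hv, zero_smul])]
      exact Finset.sum_congr rfl fun v hv => by rw [if_pos hv]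
    have e2 : ∑ v ∈ σ, (if v ∈ t then g v else 0) • ic v = ∑ v ∈ t, g v • ic v := by
      rw [← Finset.sum_subset ht (fun v _ hv => by rw [if_neg hv, zero_smul])]
      exact Finset.sum_congr rfl fun v hv => by rw [if_pos hv]
    simp only [sub_smul, Finset.sum_sub_distrib, e1, e2, h, sub_self]
  have := hσ _ h0 v hv
  linarith [this]

lemma zero_not_mem_of_indep {σ : Finset (Fin d → ℤ)} (hσ : Indep σ) : (0 : Fin d → ℤ) ∉ σ := by
  intro h0
  have := hσ (fun v => if v = 0 then 1 else 0)
    (by rw [sum_indicator_smul h0]; simp) 0 h0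
  simp at this

lemma add_not_mem_of_indep {σ : Finset (Fin d → ℤ)} (hσ : Indep σ) {a b : Fin d → ℤ}
    (ha : a ∈ σ) (hb : b ∈ σ) (hab : a ≠ b) : a + b ∉ σ := by
  intro he
  by_cases h1 : a + b = a
  · have : b = 0 := by
      have := congrArg (· - a) h1; simpa using this
    exact zero_not_mem_of_indep hσ (this ▸ hb)
  by_cases h2 : a + b = b
  · have : a = 0 := by
      have h2' : b + a = b := by rwa [add_comm] at h2
      have := congrArg (· - b) h2'; simpa using this
    exact zero_not_mem_of_indep hσ (this ▸ ha)
  · have hsum : ∑ v ∈ σ, ((fun v => if v = a then (1:ℝ) else 0) v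
        + (fun v => if v = b then (1:ℝ) else 0) v
        + (fun v => if v = a + b then (-1:ℝ) else 0) v) • ic v = 0 := by
      simp only [add_smul, Finset.sum_add_distrib]
      rw [sum_indicator_smul ha, sum_indicator_smul hb, sum_indicator_smul he, map_add ic a b]
      module
    have := hσ _ hsum (a+b) he
    simp only [if_neg h1, if_neg h2, if_pos rfl] at this
    norm_num at this

end Aux
namespace Aux

variable {d : ℕ}

/-- new cone of a blow-up: keep `a`, drop `b`. -/
def N (a b : Fin d → ℤ) (σ : Finset (Fin d → ℤ)) : Finset (Fin d → ℤ) :=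
  insert (a + b) (σ.erase b)

/-- coefficients on `σ` induced by coefficients on `N a b σ` -/
def Fc (a b : Fin d → ℤ) (f : (Fin d → ℤ) → ℝ) : (Fin d → ℤ) → ℝ :=
  fun v => if v = a then f a + f (a + b) else if v = b then f (a + b) else f v

lemma Fc_a {a b : Fin d → ℤ} (f : (Fin d → ℤ) → ℝ) : Fc a b f a = f a + f (a + b) := by
  simp [Fc]

lemma Fc_b {a b : Fin d → ℤ} (hab : a ≠ b) (f : (Fin d → ℤ) → ℝ) : Fc a b f b = f (a + b) := by
  simp [Fc, Ne.symm hab]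

lemma Fc_other {a b v : Fin d → ℤ} (hva : v ≠ a) (hvb : v ≠ b) (f : (Fin d → ℤ) → ℝ) :
    Fc a b f v = f v := by
  simp [Fc, hva, hvb]

lemma Fc_nonneg {a b : Fin d → ℤ} {f : (Fin d → ℤ) → ℝ} (hf : ∀ v, 0 ≤ f v) (v : Fin d → ℤ) :
    0 ≤ Fc a b f v := by
  unfold Fc; split
  · exact add_nonneg (hf _) (hf _)
  · split
    · exact hf _
    · exact hf _

lemma newCone_sum {σ : Finset (Fin d → ℤ)} {a b : Fin d → ℤ} (ha : a ∈ σ) (hb : b ∈ σ)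
    (hab : a ≠ b) (he : a + b ∉ σ) (f : (Fin d → ℤ) → ℝ) :
    ∑ v ∈ N a b σ, f v • ic v = ∑ v ∈ σ, Fc a b f v • ic v := by
  have ha' : a ∈ σ.erase b := Finset.mem_erase.2 ⟨hab, ha⟩
  have he' : a + b ∉ σ.erase b := fun h => he (Finset.mem_of_mem_erase h)
  have hane : ∑ v ∈ (σ.erase b).erase a, f v • ic v
      = ∑ v ∈ (σ.erase b).erase a, Fc a b f v • ic v := by
    refine Finset.sum_congr rfl (fun v hv => ?_)
    rcases Finset.mem_erase.1 hv with ⟨hva, hv2⟩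
    rcases Finset.mem_erase.1 hv2 with ⟨hvb, _⟩
    rw [Fc_other hva hvb]
  have e1 : ∑ v ∈ σ.erase b, f v • ic v
      = f a • ic a + ∑ v ∈ (σ.erase b).erase a, f v • ic v :=
    (Finset.add_sum_erase _ (fun v => f v • ic v) ha').symm
  have e2 : ∑ v ∈ σ.erase b, Fc a b f v • ic v
      = Fc a b f a • ic a + ∑ v ∈ (σ.erase b).erase a, Fc a b f v • ic v :=
    (Finset.add_sum_erase _ (fun v => Fc a b f v • ic v) ha').symm
  have e3 : ∑ v ∈ σ, Fc a b f v • ic v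
      = Fc a b f b • ic b + ∑ v ∈ σ.erase b, Fc a b f v • ic v :=
    (Finset.add_sum_erase _ (fun v => Fc a b f v • ic v) hb).symm
  rw [N, Finset.sum_insert he', e1, e3, e2, hane, Fc_a, Fc_b hab, map_add ic a b]
  module

lemma indep_newCone {σ : Finset (Fin d → ℤ)} {a b : Fin d → ℤ} (hσ : Indep σ)
    (ha : a ∈ σ) (hb : b ∈ σ) (hab : a ≠ b) : Indep (N a b σ) := by
  have he := add_not_mem_of_indep hσ ha hb hab
  intro f h0 v hv
  rw [newCone_sum ha hb hab he] at h0
  have hall := hσ _ h0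
  have hfe : f (a + b) = 0 := by
    have := hall b hb
    rwa [Fc_b hab] at this
  rcases Finset.mem_insert.1 hv with rfl | hv'
  · exact hfe
  · rcases Finset.mem_erase.1 hv' with ⟨hvb, hvσ⟩
    by_cases hva : v = a
    · have := hall a ha
      rw [Fc_a] at this
      rw [hva]; linarith [hfe, this]
    · have := hall v hvσ
      rwa [Fc_other hva hvb] at this

lemma coneOf_newCone_subset {σ : Finset (Fin d → ℤ)} {a b : Fin d → ℤ} (hσ : Indep σ)
    (ha : a ∈ σ) (hb : b ∈ σ) (hab : a ≠ b) : coneOf (N a b σ) ⊆ coneOf σ := by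
  have he := add_not_mem_of_indep hσ ha hb hab
  rintro x hx
  obtain ⟨f, hf, rfl⟩ := mem_coneOf.mp hx
  exact mem_coneOf.mpr ⟨Fc a b f, Fc_nonneg hf, newCone_sum ha hb hab he f⟩

lemma mem_coneOf_subset {s t : Finset (Fin d → ℤ)} {x : Fin d → ℝ} (hsub : t ⊆ s)
    (f : (Fin d → ℤ) → ℝ) (hf : ∀ v, 0 ≤ f v) (hx : x = ∑ v ∈ s, f v • ic v)
    (hvanish : ∀ v ∈ s, v ∉ t → f v = 0) : x ∈ coneOf t :=
  mem_coneOf.mpr ⟨f, hf, by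
    rw [hx, Finset.sum_subset hsub (fun v hv hvt => by rw [hvanish v hv hvt, zero_smul])]⟩

lemma insert_inter_insert (e : Fin d → ℤ) (X Y : Finset (Fin d → ℤ)) :
    insert e X ∩ insert e Y = insert e (X ∩ Y) := by
  ext z; simp only [Finset.mem_inter, Finset.mem_insert]; tauto

end Aux
namespace Aux

variable {d : ℕ}

lemma inter_new_old {σ τ : Finset (Fin d → ℤ)} {a b : Fin d → ℤ} (hσ : Indep σ)
    (hστ : coneOf σ ∩ coneOf τ ⊆ coneOf ((σ ∩ τ : Finset (Fin d → ℤ)) : Finset (Fin d → ℤ)))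
    (ha : a ∈ σ) (hb : b ∈ σ) (hab : a ≠ b) (hkept : a ∉ τ ∨ b ∉ τ) :
    coneOf (N a b σ) ∩ coneOf τ ⊆ coneOf (N a b σ ∩ τ) := by
  have he := add_not_mem_of_indep hσ ha hb hab
  rintro x ⟨hx1, hx2⟩
  obtain ⟨f, hf, hxe⟩ := mem_coneOf.mp hx1
  have hxσ : x ∈ coneOf σ := coneOf_newCone_subset hσ ha hb hab hx1
  obtain ⟨g, hg, hxg⟩ := mem_coneOf.mp (hστ ⟨hxσ, hx2⟩)
  have hterm := coeff_eq hσ (le_refl σ) Finset.inter_subset_left (Fc a b f) g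
    (by rw [← newCone_sum ha hb hab he, ← hxe, hxg])
  have hfe : f (a + b) = 0 := by
    rcases hkept with haτ | hbτ
    · have := hterm a ha
      rw [if_pos ha, if_neg (fun h => haτ (Finset.mem_inter.1 h).2), Fc_a] at this
      have h1 := hf a; have h2 := hf (a+b); linarith
    · have := hterm b hb
      rw [if_pos hb, if_neg (fun h => hbτ (Finset.mem_inter.1 h).2), Fc_b hab] at this
      exact this
  refine Set.mem_of_mem_of_subset (mem_coneOf_subset (t := (σ.erase b) ∩ τ) ?_ f hf hxe ?_)
    (coneOf_mono ?_)
  · exact Finset.inter_subset_left.trans (Finset.subset_insert _ _)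
  · intro v hv hvt
    rcases Finset.mem_insert.1 hv with rfl | hv'
    · exact hfe
    · rcases Finset.mem_erase.1 hv' with ⟨hvb, hvσ⟩
      have hvτ : v ∉ τ := fun hτ => hvt (Finset.mem_inter.2 ⟨hv', hτ⟩)
      by_cases hva : v = a
      · subst hva
        have := hterm v hvσ
        rw [if_pos hvσ, if_neg (fun h => hvτ (Finset.mem_inter.1 h).2), Fc_a] at this
        linarith [hfe]
      · have := hterm v hvσ
        rwa [if_pos hvσ, if_neg (fun h => hvτ (Finset.mem_inter.1 h).2),
          Fc_other hva hvb] at this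
  · exact Finset.inter_subset_inter (Finset.subset_insert _ _) (le_refl τ)

lemma inter_new_new_same {σ σ' : Finset (Fin d → ℤ)} {a b : Fin d → ℤ}
    (hσ : Indep σ) (hσ' : Indep σ')
    (hint : coneOf σ ∩ coneOf σ' ⊆ coneOf ((σ ∩ σ' : Finset (Fin d → ℤ))))
    (ha : a ∈ σ) (hb : b ∈ σ) (ha' : a ∈ σ') (hb' : b ∈ σ') (hab : a ≠ b) :
    coneOf (N a b σ) ∩ coneOf (N a b σ') ⊆ coneOf (N a b σ ∩ N a b σ') := by
  have he := add_not_mem_of_indep hσ ha hb hab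
  rintro x ⟨hx1, hx2⟩
  obtain ⟨f, hf, hxe⟩ := mem_coneOf.mp hx1
  have hxσ : x ∈ coneOf σ := coneOf_newCone_subset hσ ha hb hab hx1
  have hxσ' : x ∈ coneOf σ' := coneOf_newCone_subset hσ' ha' hb' hab hx2
  obtain ⟨g, hg, hxg⟩ := mem_coneOf.mp (hint ⟨hxσ, hxσ'⟩)
  have hterm := coeff_eq hσ (le_refl σ) Finset.inter_subset_left (Fc a b f) g
    (by rw [← newCone_sum ha hb hab he, ← hxe, hxg])
  refine mem_coneOf_subset (t := N a b σ ∩ N a b σ') ?_ f hf hxe ?_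
  · exact Finset.inter_subset_left
  · intro v hv hvt
    have hvN' : v ∉ N a b σ' := fun h => hvt (Finset.mem_inter.2 ⟨hv, h⟩)
    rcases Finset.mem_insert.1 hv with rfl | hv'
    · exact absurd (Finset.mem_insert_self _ _) hvN'
    · rcases Finset.mem_erase.1 hv' with ⟨hvb, hvσ⟩
      have hva : v ≠ a := fun h => hvN'
        (Finset.mem_insert_of_mem (Finset.mem_erase.2 ⟨h ▸ hab, h ▸ ha'⟩))
      have hvσ' : v ∉ σ' := fun h => hvN'
        (Finset.mem_insert_of_mem (Finset.mem_erase.2 ⟨hvb, h⟩))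
      have := hterm v hvσ
      rwa [if_pos hvσ, if_neg (fun h => hvσ' (Finset.mem_inter.1 h).2),
        Fc_other hva hvb] at this

lemma inter_new_new_mixed {σ σ' : Finset (Fin d → ℤ)} {a b : Fin d → ℤ}
    (hσ : Indep σ) (hσ' : Indep σ')
    (hint : coneOf σ ∩ coneOf σ' ⊆ coneOf ((σ ∩ σ' : Finset (Fin d → ℤ))))
    (ha : a ∈ σ) (hb : b ∈ σ) (ha' : a ∈ σ') (hb' : b ∈ σ') (hab : a ≠ b) :
    coneOf (N a b σ) ∩ coneOf (N b a σ') ⊆ coneOf (N a b σ ∩ N b a σ') := by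
  have he := add_not_mem_of_indep hσ ha hb hab
  have he' : b + a ∉ σ' := by
    rw [add_comm]; exact add_not_mem_of_indep hσ' ha' hb' hab
  rintro x ⟨hx1, hx2⟩
  obtain ⟨f, hf, hxe⟩ := mem_coneOf.mp hx1
  obtain ⟨f', hf', hxe'⟩ := mem_coneOf.mp hx2
  have hxσ : x ∈ coneOf σ := coneOf_newCone_subset hσ ha hb hab hx1
  have hxσ' : x ∈ coneOf σ' := coneOf_newCone_subset hσ' hb' ha' (Ne.symm hab) hx2
  obtain ⟨g, hg, hxg⟩ := mem_coneOf.mp (hint ⟨hxσ, hxσ'⟩)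
  have hterm := coeff_eq hσ (le_refl σ) Finset.inter_subset_left (Fc a b f) g
    (by rw [← newCone_sum ha hb hab he, ← hxe, hxg])
  have hterm' := coeff_eq hσ' (le_refl σ') Finset.inter_subset_right (Fc b a f') g
    (by rw [← newCone_sum hb' ha' (Ne.symm hab) he', ← hxe', hxg])
  -- key coefficient identities
  have hba : b + a = a + b := add_comm b a
  have h1 : f a + f (a + b) = g a := by
    have := hterm a ha
    rwa [if_pos ha, if_pos (Finset.mem_inter.2 ⟨ha, ha'⟩), Fc_a] at this
  have h2 : f' (a + b) = g a := by
    have := hterm' a ha'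
    rwa [if_pos ha', if_pos (Finset.mem_inter.2 ⟨ha, ha'⟩), Fc_b (Ne.symm hab), hba] at this
  have h3 : f (a + b) = g b := by
    have := hterm b hb
    rwa [if_pos hb, if_pos (Finset.mem_inter.2 ⟨hb, hb'⟩), Fc_b hab] at this
  have h4 : f' b + f' (a + b) = g b := by
    have := hterm' b hb'
    have hsim := Fc_a (a := b) (b := a) f'
    rw [hba] at hsim
    rwa [if_pos hb', if_pos (Finset.mem_inter.2 ⟨hb, hb'⟩), hsim] at this
  have hfa : f a = 0 := by
    have := hf a; have := hf' b; have := hf (a+b); have := hf' (a+b); linarith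
  refine mem_coneOf_subset (t := N a b σ ∩ N b a σ') ?_ f hf hxe ?_
  · exact Finset.inter_subset_left
  · intro v hv hvt
    have hvN' : v ∉ N b a σ' := fun h => hvt (Finset.mem_inter.2 ⟨hv, h⟩)
    rcases Finset.mem_insert.1 hv with rfl | hv'
    · exact absurd (by rw [← hba]; exact Finset.mem_insert_self _ _) hvN'
    · rcases Finset.mem_erase.1 hv' with ⟨hvb, hvσ⟩
      by_cases hva : v = a
      · subst hva; exact hfa
      · have hvσ' : v ∉ σ' := fun h => hvN'
          (Finset.mem_insert_of_mem (Finset.mem_erase.2 ⟨hva, h⟩))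
        have := hterm v hvσ
        rwa [if_pos hvσ, if_neg (fun h => hvσ' (Finset.mem_inter.1 h).2),
          Fc_other hva hvb] at this

end Aux
namespace Aux

variable {d : ℕ}

/-- The geometric invariant maintained through blow-ups. -/
def Inv (F : Finset (Finset (Fin d → ℤ))) : Prop :=
  (∀ σ ∈ F, Indep σ) ∧
  ∀ σ ∈ F, ∀ τ ∈ F, coneOf σ ∩ coneOf τ ⊆ coneOf ((σ ∩ τ : Finset (Fin d → ℤ)))

/-- Key geometric fact: in a fan, a cone containing `a + b` (for `a ≠ b` in some cone)
contains `a` and `b`. -/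
lemma mem_of_add_mem {F : Finset (Finset (Fin d → ℤ))} (hInv : Inv F)
    {σ τ : Finset (Fin d → ℤ)} (hσ : σ ∈ F) (hτ : τ ∈ F) {a b : Fin d → ℤ}
    (ha : a ∈ σ) (hb : b ∈ σ) (hab : a ≠ b) (he : a + b ∈ τ) : a ∈ τ ∧ b ∈ τ := by
  have hIσ := hInv.1 σ hσ
  have hxτ : (ic (a+b) : Fin d → ℝ) ∈ coneOf τ := ic_mem_coneOf he
  have hxσ : (ic (a+b) : Fin d → ℝ) ∈ coneOf σ := by
    refine mem_coneOf.mpr ⟨fun v => (if v = a then 1 else 0) + (if v = b then 1 else 0),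
      fun v => by dsimp; split <;> split <;> norm_num, ?_⟩
    simp only [add_smul, Finset.sum_add_distrib]
    rw [sum_indicator_smul ha, sum_indicator_smul hb, map_add ic a b]
    module
  obtain ⟨g, hg, hxg⟩ := mem_coneOf.mp (hInv.2 σ hσ τ hτ ⟨hxσ, hxτ⟩)
  have hxf : (ic (a+b) : Fin d → ℝ)
      = ∑ v ∈ σ, ((fun v => (if v = a then (1:ℝ) else 0) + (if v = b then 1 else 0)) v) • ic v
      := by
    simp only [add_smul, Finset.sum_add_distrib]
    rw [sum_indicator_smul ha, sum_indicator_smul hb, map_add ic a b]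
    module
  have hterm := coeff_eq hIσ (le_refl σ) Finset.inter_subset_left _ g (by rw [← hxf, hxg])
  constructor
  · by_contra haτ
    have := hterm a ha
    rw [if_pos ha, if_neg (fun h => haτ (Finset.mem_inter.1 h).2)] at this
    simp [hab] at this
  · by_contra hbτ
    have := hterm b hb
    rw [if_pos hb, if_neg (fun h => hbτ (Finset.mem_inter.1 h).2)] at this
    simp [Ne.symm hab] at this

lemma mem_blowUp_iff {F : Finset (Finset (Fin d → ℤ))} {ε₁ ε₂ : Fin d → ℤ}
    {τ' : Finset (Fin d → ℤ)} :
    τ' ∈ blowUp F ε₁ ε₂ ↔ (τ' ∈ F ∧ ¬(ε₁ ∈ τ' ∧ ε₂ ∈ τ')) ∨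
      (∃ σ ∈ F, (ε₁ ∈ σ ∧ ε₂ ∈ σ) ∧
        (τ' = insert (ε₁ + ε₂) (σ.erase ε₂) ∨ τ' = insert (ε₁ + ε₂) (σ.erase ε₁))) := by
  simp only [blowUp, Finset.mem_union, Finset.mem_filter, Finset.mem_biUnion,
    Finset.mem_insert, Finset.mem_singleton]
  constructor
  · rintro (h | ⟨σ, ⟨hσ, h12⟩, hc⟩)
    · exact Or.inl h
    · exact Or.inr ⟨σ, hσ, h12, hc⟩
  · rintro (h | ⟨σ, hσ, h12, hc⟩)
    · exact Or.inl h
    · exact Or.inr ⟨σ, ⟨hσ, h12⟩, hc⟩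

lemma N_alt (ε₁ ε₂ : Fin d → ℤ) (σ : Finset (Fin d → ℤ)) :
    insert (ε₁ + ε₂) (σ.erase ε₁) = N ε₂ ε₁ σ := by
  rw [N, add_comm]

lemma inv_blowUp {F : Finset (Finset (Fin d → ℤ))} {ε₁ ε₂ : Fin d → ℤ} (hInv : Inv F)
    (hne : ε₁ ≠ ε₂) : Inv (blowUp F ε₁ ε₂) := by
  constructor
  · intro σ' hσ'
    rcases mem_blowUp_iff.1 hσ' with ⟨hσF, _⟩ | ⟨σ, hσF, ⟨h1, h2⟩, hcase⟩
    · exact hInv.1 σ' hσF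
    · rcases hcase with rfl | rfl
      · exact indep_newCone (hInv.1 σ hσF) h1 h2 hne
      · rw [N_alt]
        exact indep_newCone (hInv.1 σ hσF) h2 h1 (Ne.symm hne)
  · intro σ' hσ' τ' hτ'
    rcases mem_blowUp_iff.1 hσ' with ⟨hσF, hσkept⟩ | ⟨σ, hσF, ⟨hσ1, hσ2⟩, hσcase⟩
    · rcases mem_blowUp_iff.1 hτ' with ⟨hτF, _⟩ | ⟨τ, hτF, ⟨hτ1, hτ2⟩, hτcase⟩
      · exact hInv.2 σ' hσF τ' hτF
      · -- old σ', new τ'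
        have hk : ε₁ ∉ σ' ∨ ε₂ ∉ σ' := by tauto
        rw [Set.inter_comm, Finset.inter_comm]
        rcases hτcase with rfl | rfl
        · exact inter_new_old (hInv.1 τ hτF) (hInv.2 τ hτF σ' hσF) hτ1 hτ2 hne hk
        · rw [N_alt]
          exact inter_new_old (hInv.1 τ hτF) (hInv.2 τ hτF σ' hσF) hτ2 hτ1 (Ne.symm hne)
            (Or.symm hk)
    · rcases mem_blowUp_iff.1 hτ' with ⟨hτF, hτkept⟩ | ⟨τ, hτF, ⟨hτ1, hτ2⟩, hτcase⟩
      · -- new σ', old τ'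
        have hk : ε₁ ∉ τ' ∨ ε₂ ∉ τ' := by tauto
        rcases hσcase with rfl | rfl
        · exact inter_new_old (hInv.1 σ hσF) (hInv.2 σ hσF τ' hτF) hσ1 hσ2 hne hk
        · rw [N_alt]
          exact inter_new_old (hInv.1 σ hσF) (hInv.2 σ hσF τ' hτF) hσ2 hσ1 (Ne.symm hne)
            (Or.symm hk)
      · -- new / new
        rcases hσcase with rfl | rfl <;> rcases hτcase with rfl | rfl
        · exact inter_new_new_same (hInv.1 σ hσF) (hInv.1 τ hτF)
            (hInv.2 σ hσF τ hτF) hσ1 hσ2 hτ1 hτ2 hne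
        · rw [N_alt]
          exact inter_new_new_mixed (hInv.1 σ hσF) (hInv.1 τ hτF)
            (hInv.2 σ hσF τ hτF) hσ1 hσ2 hτ1 hτ2 hne
        · rw [N_alt, Set.inter_comm, Finset.inter_comm]
          exact inter_new_new_mixed (hInv.1 τ hτF) (hInv.1 σ hσF)
            (hInv.2 τ hτF σ hσF) hτ1 hτ2 hσ1 hσ2 hne
        · rw [N_alt, N_alt]
          exact inter_new_new_same (hInv.1 σ hσF) (hInv.1 τ hτF)
            (hInv.2 σ hσF τ hτF) hσ2 hσ1 hτ2 hτ1 (Ne.symm hne)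

end Aux
namespace Aux

variable {d : ℕ} {B : Matrix (Fin d) (Fin 2) ℤ} {F : Finset (Finset (Fin d → ℤ))}
  {ε₁ ε₂ : Fin d → ℤ}

lemma bEdge_add (a b : Fin d → ℤ) (i : Fin 2) :
    bEdge B (a + b) i = bEdge B a i + bEdge B b i := by
  simp [bEdge, add_mul, Finset.sum_add_distrib]

lemma deltaB_add (a b : Fin d → ℤ) : deltaB B (a + b) = deltaB B a + deltaB B b := by
  simp [deltaB, bEdge_add]; ring

lemma deltaB_zero : deltaB B 0 = 0 := by simp [deltaB, bEdge]

lemma monotone_fin2 {f : Fin 2 → ℤ} (h : f 0 ≤ f 1) : Monotone f := by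
  intro i j hij
  fin_cases i <;> fin_cases j
  · exact le_refl _
  · exact h
  · exact absurd hij (by decide)
  · exact le_refl _

lemma fin2_cases (x : Fin 2) : x = 0 ∨ x = 1 := by omega

lemma goodCone_iff {σ : Finset (Fin d → ℤ)} :
    GoodCone B σ ↔ (∀ ε ∈ σ, 0 ≤ deltaB B ε) ∨ (∀ ε ∈ σ, deltaB B ε ≤ 0) := by
  constructor
  · rintro ⟨γ, hγ⟩
    have key : ∀ ε ∈ σ, bEdge B ε (γ 0) ≤ bEdge B ε (γ 1) :=
      fun ε hε => hγ ε hε (by decide : (0 : Fin 2) ≤ 1)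
    rcases fin2_cases (γ 0) with h0 | h0
    · have h1 : γ 1 = 1 := by
        rcases fin2_cases (γ 1) with h1 | h1
        · exact absurd (γ.injective (h1.trans h0.symm)) (by decide)
        · exact h1
      right; intro ε hε
      have := key ε hε; rw [h0, h1] at this
      simp only [deltaB]; omega
    · have h1 : γ 1 = 0 := by
        rcases fin2_cases (γ 1) with h1 | h1
        · exact h1
        · exact absurd (γ.injective (h1.trans h0.symm)) (by decide)
      left; intro ε hε
      have := key ε hε; rw [h0, h1] at this
      simp only [deltaB]; omega
  · rintro (h | h)
    · refine ⟨Equiv.swap 0 1, fun ε hε => monotone_fin2 ?_⟩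
      have := h ε hε
      simp only [Equiv.swap_apply_left, Equiv.swap_apply_right, deltaB] at this ⊢
      omega
    · refine ⟨Equiv.refl _, fun ε hε => monotone_fin2 ?_⟩
      have := h ε hε
      simp only [Equiv.refl_apply, deltaB] at this ⊢
      omega

lemma not_goodCone_iff {σ : Finset (Fin d → ℤ)} :
    ¬ GoodCone B σ ↔ (∃ a ∈ σ, 0 < deltaB B a) ∧ (∃ b ∈ σ, deltaB B b < 0) := by
  rw [goodCone_iff]
  push_neg
  constructor
  · rintro ⟨⟨a, ha, ha'⟩, ⟨b, hb, hb'⟩⟩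
    exact ⟨⟨b, hb, hb'⟩, ⟨a, ha, ha'⟩⟩
  · rintro ⟨⟨a, ha, ha'⟩, ⟨b, hb, hb'⟩⟩
    exact ⟨⟨b, hb, hb'⟩, ⟨a, ha, ha'⟩⟩

lemma mem_edges {ε : Fin d → ℤ} {G : Finset (Finset (Fin d → ℤ))} :
    ε ∈ edges G ↔ ∃ σ ∈ G, ε ∈ σ := by simp [edges]

lemma mem_badCones {σ : Finset (Fin d → ℤ)} :
    σ ∈ badCones B F ↔ σ ∈ F ∧ ¬ GoodCone B σ := Finset.mem_filter

lemma edges_mono {G G' : Finset (Finset (Fin d → ℤ))} (h : G ⊆ G') : edges G ⊆ edges G' :=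
  fun ε hε => by
    obtain ⟨σ, hσ, hεσ⟩ := mem_edges.1 hε
    exact mem_edges.2 ⟨σ, h hσ, hεσ⟩

lemma natAbs_le_mu {ε : Fin d → ℤ} (h : ε ∈ edges (badCones B F)) :
    (deltaB B ε).natAbs ≤ muB B F := Finset.le_sup (f := fun ε => (deltaB B ε).natAbs) h

lemma mem_EB {ε : Fin d → ℤ} :
    ε ∈ EB B F ↔ ε ∈ edges (badCones B F) ∧ (deltaB B ε).natAbs = muB B F :=
  Finset.mem_filter

lemma mem_EBe {ε ε' : Fin d → ℤ} :
    ε' ∈ EBe B F ε ↔ (ε' ∈ edges (badCones B F) ∧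
      ε' ∈ edges (F.filter fun σ => ε ∈ σ)) ∧ deltaB B ε * deltaB B ε' < 0 := by
  rw [EBe, Finset.mem_filter, Finset.mem_inter]

-- ### context of a B-good blow-up
section Step

variable (h1 : ε₁ ∈ EB B F) (h2 : ε₂ ∈ EBe B F ε₁)
  (hmax : (deltaB B ε₂).natAbs = (EBe B F ε₁).sup (fun ε => (deltaB B ε).natAbs))

include h2 in
lemma hprod : deltaB B ε₁ * deltaB B ε₂ < 0 := (mem_EBe.1 h2).2

include h2 in
lemma hne12 : ε₁ ≠ ε₂ := by
  intro h
  have := hprod h2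
  rw [h] at this
  nlinarith [this]

include h2 in
lemma star12 : ∃ σ ∈ F, ε₁ ∈ σ ∧ ε₂ ∈ σ := by
  obtain ⟨σ, hσ, hε₂⟩ := mem_edges.1 (mem_EBe.1 h2).1.2
  rw [Finset.mem_filter] at hσ
  exact ⟨σ, hσ.1, hσ.2, hε₂⟩

include h2 in
lemma bad_of_both {σ : Finset (Fin d → ℤ)} (hσ : σ ∈ F) (hσ1 : ε₁ ∈ σ) (hσ2 : ε₂ ∈ σ) :
    σ ∈ badCones B F := by
  refine mem_badCones.2 ⟨hσ, not_goodCone_iff.2 ?_⟩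
  rcases mul_neg_iff.1 (hprod h2) with ⟨hp, hn⟩ | ⟨hn, hp⟩
  · exact ⟨⟨ε₁, hσ1, hp⟩, ⟨ε₂, hσ2, hn⟩⟩
  · exact ⟨⟨ε₂, hσ2, hp⟩, ⟨ε₁, hσ1, hn⟩⟩

include h1 h2 in
lemma delta2_le : (deltaB B ε₂).natAbs ≤ (deltaB B ε₁).natAbs := by
  rw [(mem_EB.1 h1).2]
  exact natAbs_le_mu (mem_EBe.1 h2).1.1

include h1 h2 in
lemma delta_e_lt : (deltaB B (ε₁ + ε₂)).natAbs < muB B F := by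
  have hd2 := delta2_le h1 h2
  have hmu := (mem_EB.1 h1).2
  rw [deltaB_add]
  rcases mul_neg_iff.1 (hprod h2) with ⟨hp, hn⟩ | ⟨hn, hp⟩ <;> omega

include h2 in
lemma edges_bad_blowUp {ε : Fin d → ℤ} (hε : ε ∈ edges (badCones B (blowUp F ε₁ ε₂))) :
    ε = ε₁ + ε₂ ∨ ε ∈ edges (badCones B F) := by
  obtain ⟨τ', hτ', hετ'⟩ := mem_edges.1 hε
  rcases mem_badCones.1 hτ' with ⟨hτ'F, hτ'bad⟩
  rcases mem_blowUp_iff.1 hτ'F with ⟨hF, _⟩ | ⟨σ, hσF, ⟨hσ1, hσ2⟩, hcase⟩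
  · exact Or.inr (mem_edges.2 ⟨τ', mem_badCones.2 ⟨hF, hτ'bad⟩, hετ'⟩)
  · have hσbad := bad_of_both h2 hσF hσ1 hσ2
    rcases hcase with rfl | rfl <;>
      rcases Finset.mem_insert.1 hετ' with rfl | hε' <;>
      first
        | exact Or.inl rfl
        | exact Or.inr (mem_edges.2 ⟨σ, hσbad, Finset.mem_of_mem_erase hε'⟩)

include h1 h2 in
lemma mu_blowUp_le : muB B (blowUp F ε₁ ε₂) ≤ muB B F := by
  refine Finset.sup_le fun ε hε => ?_
  rcases edges_bad_blowUp h2 hε with rfl | hold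
  · exact le_of_lt (delta_e_lt h1 h2)
  · exact natAbs_le_mu hold

include h2 in
lemma no_both {τ' : Finset (Fin d → ℤ)} (hτ' : τ' ∈ blowUp F ε₁ ε₂) :
    ¬ (ε₁ ∈ τ' ∧ ε₂ ∈ τ') := by
  have hp := hprod h2
  rintro ⟨he1, he2⟩
  rcases mem_blowUp_iff.1 hτ' with ⟨_, hk⟩ | ⟨σ, hσF, ⟨hσ1, hσ2⟩, hcase⟩
  · exact hk ⟨he1, he2⟩
  · rcases hcase with rfl | rfl
    · rcases Finset.mem_insert.1 he2 with h | h
      · have : ε₁ = 0 := by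
          have h' : ε₁ + ε₂ = ε₂ := h.symm
          funext l; have := congrFun h' l; simp at this ⊢; omega
        rw [this, deltaB_zero, zero_mul] at hp
        exact absurd hp (by norm_num)
      · exact absurd rfl (Finset.mem_erase.1 h).1
    · rcases Finset.mem_insert.1 he1 with h | h
      · have : ε₂ = 0 := by
          have h' : ε₁ + ε₂ = ε₁ := h.symm
          funext l; have := congrFun h' l; simp at this ⊢; omega
        rw [this, deltaB_zero, mul_zero] at hp
        exact absurd hp (by norm_num)
      · exact absurd rfl (Finset.mem_erase.1 h).1

include h2 in
lemma cones_with_e (hInv : Inv F) {τ' : Finset (Fin d → ℤ)} (hτ' : τ' ∈ blowUp F ε₁ ε₂)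
    (he : ε₁ + ε₂ ∈ τ') :
    ∃ σ ∈ F, (ε₁ ∈ σ ∧ ε₂ ∈ σ) ∧
      (τ' = insert (ε₁ + ε₂) (σ.erase ε₂) ∨ τ' = insert (ε₁ + ε₂) (σ.erase ε₁)) := by
  rcases mem_blowUp_iff.1 hτ' with ⟨hF, hk⟩ | h
  · obtain ⟨σ₀, hσ₀F, hσ₀1, hσ₀2⟩ := star12 h2
    exact absurd (mem_of_add_mem hInv hσ₀F hF hσ₀1 hσ₀2 (hne12 h2) he) hk
  · exact h

include h1 h2 in
lemma EB_blowUp_subset (hmu : muB B (blowUp F ε₁ ε₂) = muB B F) :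
    EB B (blowUp F ε₁ ε₂) ⊆ EB B F := by
  intro ε hε
  rcases mem_EB.1 hε with ⟨hεe, hεμ⟩
  rw [hmu] at hεμ
  have hne : ε ≠ ε₁ + ε₂ := by
    intro h; rw [h] at hεμ; exact absurd hεμ (Nat.ne_of_lt (delta_e_lt h1 h2))
  rcases edges_bad_blowUp h2 hεe with h | h
  · exact absurd h hne
  · exact mem_EB.2 ⟨h, hεμ⟩

end Step

end Aux
namespace Aux

variable {d : ℕ} {B : Matrix (Fin d) (Fin 2) ℤ} {F : Finset (Finset (Fin d → ℤ))}
  {ε₁ ε₂ : Fin d → ℤ}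

section Step2

variable (h1 : ε₁ ∈ EB B F) (h2 : ε₂ ∈ EBe B F ε₁)
  (hmax : (deltaB B ε₂).natAbs = (EBe B F ε₁).sup (fun ε => (deltaB B ε).natAbs))

include h1 h2 hmax in
lemma EBe_blowUp_subset (hInv : Inv F) (hmu : muB B (blowUp F ε₁ ε₂) = muB B F)
    {ε : Fin d → ℤ} (hε : ε ∈ EB B (blowUp F ε₁ ε₂)) :
    EBe B (blowUp F ε₁ ε₂) ε ⊆ EBe B F ε := by
  have hεF : ε ∈ EB B F := EB_blowUp_subset h1 h2 hmu hε
  have hεμ : (deltaB B ε).natAbs = muB B F := (mem_EB.1 hεF).2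
  have hεne : ε ≠ ε₁ + ε₂ := by
    intro h; rw [h] at hεμ; exact absurd hεμ (Nat.ne_of_lt (delta_e_lt h1 h2))
  intro ε' hε'
  rcases mem_EBe.1 hε' with ⟨⟨hbad', hstar'⟩, hsign⟩
  -- ε' is not the exceptional edge
  have hε'ne : ε' ≠ ε₁ + ε₂ := by
    intro h
    subst h
    -- common cone of ε and the exceptional edge must be a new cone
    obtain ⟨τ', hτ'mem, hε'τ'⟩ := mem_edges.1 hstar'
    rw [Finset.mem_filter] at hτ'mem
    obtain ⟨σs, hσsF, ⟨hσs1, hσs2⟩, hcase⟩ :=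
      cones_with_e h2 hInv hτ'mem.1 hε'τ'
    have hεσs : ε ∈ σs := by
      rcases hcase with rfl | rfl <;> rcases Finset.mem_insert.1 hτ'mem.2 with h | h <;>
        first
          | exact absurd h hεne
          | exact Finset.mem_of_mem_erase h
    -- sign analysis : δε and δε₁ must have opposite signs
    have hp := hprod h2
    have hd2 := delta2_le h1 h2
    have h1μ := (mem_EB.1 h1).2
    rw [deltaB_add] at hsign
    have hsignε1 : deltaB B ε₁ * deltaB B ε < 0 := by
      rcases mul_neg_iff.1 hp with ⟨hpp, hnn⟩ | ⟨hnn, hpp⟩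
      · have hsum : 0 ≤ deltaB B ε₁ + deltaB B ε₂ := by omega
        have hεneg : deltaB B ε < 0 := by
          by_contra hc
          push_neg at hc
          exact absurd hsign (not_lt.2 (mul_nonneg hc hsum))
        exact mul_neg_of_pos_of_neg hpp hεneg
      · have hsum : deltaB B ε₁ + deltaB B ε₂ ≤ 0 := by omega
        have hεpos : 0 < deltaB B ε := by
          by_contra hc
          push_neg at hc
          exact absurd hsign (not_lt.2 (by nlinarith))
        exact mul_neg_of_neg_of_pos hnn hεpos
    -- hence ε ∈ EBe B F ε₁, so by maximality |δε₂| = μ and δ(ε₁+ε₂)=0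
    have hεEBe : ε ∈ EBe B F ε₁ := by
      refine mem_EBe.2 ⟨⟨(mem_EB.1 hεF).1, mem_edges.2 ⟨σs, Finset.mem_filter.2
        ⟨hσsF, hσs1⟩, hεσs⟩⟩, hsignε1⟩
    have hle : (deltaB B ε).natAbs ≤ (deltaB B ε₂).natAbs := by
      rw [hmax]; exact Finset.le_sup (f := fun ε => (deltaB B ε).natAbs) hεEBe
    have : deltaB B ε₁ + deltaB B ε₂ = 0 := by
      rcases mul_neg_iff.1 hp with ⟨hpp, hnn⟩ | ⟨hnn, hpp⟩ <;> omega
    rw [this, mul_zero] at hsign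
    exact absurd hsign (by norm_num)
  refine mem_EBe.2 ⟨⟨?_, ?_⟩, hsign⟩
  · obtain ⟨τb, hτb, hε'τb⟩ := mem_edges.1 hbad'
    rcases mem_badCones.1 hτb with ⟨hτbF', hτbbad⟩
    rcases mem_blowUp_iff.1 hτbF' with ⟨hFb, _⟩ | ⟨σb, hσbF, ⟨hσb1, hσb2⟩, hcaseb⟩
    · exact mem_edges.2 ⟨τb, mem_badCones.2 ⟨hFb, hτbbad⟩, hε'τb⟩
    · have hσbad := bad_of_both h2 hσbF hσb1 hσb2
      have : ε' ∈ σb := by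
        rcases hcaseb with rfl | rfl <;> rcases Finset.mem_insert.1 hε'τb with h | h <;>
          first
            | exact absurd h hε'ne
            | exact Finset.mem_of_mem_erase h
      exact mem_edges.2 ⟨σb, hσbad, this⟩
  · obtain ⟨τs, hτs, hε'τs⟩ := mem_edges.1 hstar'
    rw [Finset.mem_filter] at hτs
    rcases mem_blowUp_iff.1 hτs.1 with ⟨hFs, _⟩ | ⟨σs, hσsF, ⟨hσs1, hσs2⟩, hcases⟩
    · exact mem_edges.2 ⟨τs, Finset.mem_filter.2 ⟨hFs, hτs.2⟩, hε'τs⟩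
    · have hεσs : ε ∈ σs := by
        rcases hcases with rfl | rfl <;> rcases Finset.mem_insert.1 hτs.2 with h | h <;>
          first
            | exact absurd h hεne
            | exact Finset.mem_of_mem_erase h
      have hε'σs : ε' ∈ σs := by
        rcases hcases with rfl | rfl <;> rcases Finset.mem_insert.1 hε'τs with h | h <;>
          first
            | exact absurd h hε'ne
            | exact Finset.mem_of_mem_erase h
      exact mem_edges.2 ⟨σs, Finset.mem_filter.2 ⟨hσsF, hεσs⟩, hε'σs⟩

include h2 in
lemma eps2_not_mem : ε₂ ∉ EBe B (blowUp F ε₁ ε₂) ε₁ := by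
  intro h
  obtain ⟨τ', hτ', hε₂τ'⟩ := mem_edges.1 (mem_EBe.1 h).1.2
  rw [Finset.mem_filter] at hτ'
  exact no_both h2 hτ'.1 ⟨hτ'.2, hε₂τ'⟩

include h1 h2 hmax in
lemma nu_blowUp_lt (hInv : Inv F) (hmu : muB B (blowUp F ε₁ ε₂) = muB B F) :
    nuB B (blowUp F ε₁ ε₂) < nuB B F := by
  have hEB := EB_blowUp_subset h1 h2 hmu
  have hEBe := fun {ε} (hε : ε ∈ EB B (blowUp F ε₁ ε₂)) =>
    EBe_blowUp_subset h1 h2 hmax hInv hmu hε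
  by_cases hmem : ε₁ ∈ EB B (blowUp F ε₁ ε₂)
  · have hstrict : (EBe B (blowUp F ε₁ ε₂) ε₁).card < (EBe B F ε₁).card := by
      refine Finset.card_lt_card ((Finset.ssubset_iff_of_subset (hEBe hmem)).2
        ⟨ε₂, h2, eps2_not_mem h2⟩)
    calc nuB B (blowUp F ε₁ ε₂)
        = ∑ ε ∈ EB B (blowUp F ε₁ ε₂), (EBe B (blowUp F ε₁ ε₂) ε).card := rfl
      _ < ∑ ε ∈ EB B (blowUp F ε₁ ε₂), (EBe B F ε).card := by
          refine Finset.sum_lt_sum (fun ε hε => Finset.card_le_card (hEBe hε)) ?_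
          exact ⟨ε₁, hmem, hstrict⟩
      _ ≤ ∑ ε ∈ EB B F, (EBe B F ε).card :=
          Finset.sum_le_sum_of_subset hEB
      _ = nuB B F := rfl
  · calc nuB B (blowUp F ε₁ ε₂)
        = ∑ ε ∈ EB B (blowUp F ε₁ ε₂), (EBe B (blowUp F ε₁ ε₂) ε).card := rfl
      _ ≤ ∑ ε ∈ EB B (blowUp F ε₁ ε₂), (EBe B F ε).card :=
          Finset.sum_le_sum (fun ε hε => Finset.card_le_card (hEBe hε))
      _ < ∑ ε ∈ EB B F, (EBe B F ε).card := by
          refine Finset.sum_lt_sum_of_subset hEB h1 hmem ?_ (fun _ _ _ => Nat.zero_le _)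
          exact Finset.card_pos.2 ⟨ε₂, h2⟩
      _ = nuB B F := rfl

end Step2

lemma exists_good_data (hbad : ¬ GoodFan B F) :
    ∃ ε₁ ε₂ : Fin d → ℤ, ε₁ ∈ EB B F ∧ ε₂ ∈ EBe B F ε₁ ∧
      (deltaB B ε₂).natAbs = (EBe B F ε₁).sup (fun ε => (deltaB B ε).natAbs) := by
  rw [GoodFan] at hbad
  push_neg at hbad
  obtain ⟨σb, hσbF, hσbbad⟩ := hbad
  obtain ⟨⟨εp, hεp, hεp'⟩, ⟨εn, hεn, hεn'⟩⟩ := not_goodCone_iff.1 hσbbad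
  have hσbbad' : σb ∈ badCones B F := mem_badCones.2 ⟨hσbF, hσbbad⟩
  have hεpe : εp ∈ edges (badCones B F) := mem_edges.2 ⟨σb, hσbbad', hεp⟩
  obtain ⟨ε₁, hε₁mem, hε₁sup⟩ := Finset.exists_mem_eq_sup (edges (badCones B F))
    ⟨εp, hεpe⟩ (fun ε => (deltaB B ε).natAbs)
  have hε₁EB : ε₁ ∈ EB B F := mem_EB.2 ⟨hε₁mem, hε₁sup.symm⟩
  have hμpos : 1 ≤ muB B F := by
    have := natAbs_le_mu (B := B) (F := F) hεpe
    omega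
  have hδ1 : deltaB B ε₁ ≠ 0 := by
    have := (mem_EB.1 hε₁EB).2
    omega
  obtain ⟨σ₁, hσ₁bad, hε₁σ₁⟩ := mem_edges.1 hε₁mem
  have hσ₁F : σ₁ ∈ F := (mem_badCones.1 hσ₁bad).1
  obtain ⟨⟨p₁, hp₁, hp₁'⟩, ⟨n₁, hn₁, hn₁'⟩⟩ :=
    not_goodCone_iff.1 (mem_badCones.1 hσ₁bad).2
  have hnonempty : (EBe B F ε₁).Nonempty := by
    rcases lt_or_gt_of_ne hδ1 with hneg | hpos
    · refine ⟨p₁, mem_EBe.2 ⟨⟨mem_edges.2 ⟨σ₁, hσ₁bad, hp₁⟩,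
        mem_edges.2 ⟨σ₁, Finset.mem_filter.2 ⟨hσ₁F, hε₁σ₁⟩, hp₁⟩⟩,
        mul_neg_of_neg_of_pos hneg hp₁'⟩⟩
    · refine ⟨n₁, mem_EBe.2 ⟨⟨mem_edges.2 ⟨σ₁, hσ₁bad, hn₁⟩,
        mem_edges.2 ⟨σ₁, Finset.mem_filter.2 ⟨hσ₁F, hε₁σ₁⟩, hn₁⟩⟩,
        mul_neg_of_pos_of_neg hpos hn₁'⟩⟩
  obtain ⟨ε₂, hε₂mem, hε₂sup⟩ := Finset.exists_mem_eq_sup (EBe B F ε₁) hnonempty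
    (fun ε => (deltaB B ε).natAbs)
  exact ⟨ε₁, ε₂, hε₁EB, hε₂mem, hε₂sup.symm⟩

end Aux
namespace Aux

variable {d : ℕ}

lemma indep_of_nsCone {σ : Finset (Fin d → ℤ)} (h : IsNsCone d σ) : Indep σ := by
  obtain ⟨hcard, hspan⟩ := h
  have hsingle : ∀ l : Fin d, (Pi.single l 1 : Fin d → ℝ) ∈
      Submodule.span ℝ (ic '' (σ : Set (Fin d → ℤ))) := by
    intro l
    have hz : (Pi.single l 1 : Fin d → ℤ) ∈ Submodule.span ℤ (σ : Set (Fin d → ℤ)) := by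
      rw [hspan]; trivial
    have h1 : ic (Pi.single l 1 : Fin d → ℤ) ∈
        Submodule.map ic (Submodule.span ℤ (σ : Set (Fin d → ℤ))) :=
      Submodule.mem_map_of_mem hz
    rw [Submodule.map_span] at h1
    have h2 := Submodule.span_le_restrictScalars ℤ ℝ (ic '' (σ : Set (Fin d → ℤ))) h1
    have h3 : ic (Pi.single l 1 : Fin d → ℤ) = (Pi.single l 1 : Fin d → ℝ) := by
      funext j
      rw [ic_def]
      by_cases hj : j = l
      · subst hj; simp
      · simp [Pi.single_apply, hj]
    rwa [h3] at h2
  have hspanR : ⊤ ≤ Submodule.span ℝ (Set.range (fun x : σ => (ic x.1 : Fin d → ℝ))) := by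
    have hrange : Set.range (fun x : σ => (ic x.1 : Fin d → ℝ))
        = ic '' (σ : Set (Fin d → ℤ)) := by
      ext y
      constructor
      · rintro ⟨⟨v, hv⟩, rfl⟩; exact ⟨v, hv, rfl⟩
      · rintro ⟨v, hv, rfl⟩; exact ⟨⟨v, hv⟩, rfl⟩
    rw [hrange]
    intro x _
    have hx : x = ∑ l : Fin d, x l • (Pi.single l 1 : Fin d → ℝ) := by
      funext j
      rw [Finset.sum_apply]
      rw [Finset.sum_eq_single j (fun l _ hl => by simp [Pi.single_apply, Ne.symm hl])
        (fun h => absurd (Finset.mem_univ j) h)]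
      simp
    rw [hx]
    exact Submodule.sum_mem _ (fun l _ => Submodule.smul_mem _ _ (hsingle l))
  have hcard2 : Fintype.card σ = Module.finrank ℝ (Fin d → ℝ) := by
    rw [Fintype.card_coe, hcard, Module.finrank_fintype_fun_eq_card, Fintype.card_fin]
  have hLI := linearIndependent_of_top_le_span_of_card_eq_finrank hspanR hcard2
  intro f hsum v hv
  have hsum' : ∑ i : σ, f i.1 • (ic i.1 : Fin d → ℝ) = 0 := by
    rw [Finset.sum_coe_sort σ (fun v => f v • (ic v : Fin d → ℝ))]
    exact hsum
  exact Fintype.linearIndependent_iff.1 hLI (fun i => f i.1) hsum' ⟨v, hv⟩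

lemma indepZ {σ : Finset (Fin d → ℤ)} (hσ : Indep σ) (g : (Fin d → ℤ) → ℤ)
    (h : ∑ v ∈ σ, g v • v = 0) : ∀ v ∈ σ, g v = 0 := by
  have hreal : ∑ v ∈ σ, ((g v : ℝ)) • ic v = 0 := by
    have := congrArg ic h
    rw [map_sum, map_zero] at this
    rw [← this]
    exact Finset.sum_congr rfl fun v _ => by rw [map_smul, Int.cast_smul_eq_zsmul]
  intro v hv
  exact_mod_cast hσ _ hreal v hv

lemma prim_of_nsCone {σ : Finset (Fin d → ℤ)} (hns : IsNsCone d σ) {v : Fin d → ℤ}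
    (hv : v ∈ σ) : ∀ (k : ℤ) (w : Fin d → ℤ), v = k • w → IsUnit k := by
  intro k w h
  have hIσ := indep_of_nsCone hns
  have hw : w ∈ Submodule.span ℤ ((σ : Set (Fin d → ℤ))) := by rw [hns.2]; trivial
  obtain ⟨g, -, hg⟩ := Submodule.mem_span_finset.1 hw
  have hrel : ∑ u ∈ σ, (k * g u - (if u = v then 1 else 0)) • u = 0 := by
    simp only [sub_smul, Finset.sum_sub_distrib, mul_smul]
    rw [← Finset.smul_sum, hg, ← h]
    rw [Finset.sum_eq_single v (fun w _ hw => by simp [hw]) (fun h => absurd hv h)]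
    simp
  have := indepZ hIσ _ hrel v hv
  rw [if_pos rfl] at this
  exact IsUnit.of_mul_eq_one (a := k) (g v) (by omega)

lemma prim_eq {v w₀ : Fin d → ℤ} (hvp : ∀ (k : ℤ) (u : Fin d → ℤ), v = k • u → IsUnit k)
    (hwp : ∀ (k : ℤ) (u : Fin d → ℤ), w₀ = k • u → IsUnit k) (hv0 : v ≠ 0)
    (α : ℝ) (hα : 0 < α) (h : (ic w₀ : Fin d → ℝ) = α • (ic v : Fin d → ℝ)) : w₀ = v := by
  obtain ⟨l₀, hl₀⟩ := Function.ne_iff.1 hv0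
  simp only [Pi.zero_apply] at hl₀
  set a : ℤ := v l₀ with ha_def
  set b : ℤ := w₀ l₀ with hb_def
  have hcomp : ∀ l, ((w₀ l : ℝ)) = α * (v l : ℝ) := by
    intro l
    have := congrFun h l
    rwa [ic_def, ic_def, Pi.smul_apply, smul_eq_mul] at this
  have hb : (b : ℝ) = α * (a : ℝ) := hcomp l₀
  have hab : a • w₀ = b • v := by
    funext l
    have : (a : ℝ) * (w₀ l : ℝ) = (b : ℝ) * (v l : ℝ) := by
      rw [hcomp l, hb]; ring
    have : ((a * w₀ l : ℤ) : ℝ) = ((b * v l : ℤ) : ℝ) := by push_cast; exact this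
    have := Int.cast_injective this
    simpa using this
  set G : ℤ := (Int.gcd a b : ℤ) with hG_def
  have hG0 : G ≠ 0 := by
    simp only [hG_def]
    rw [Ne, Int.natCast_eq_zero, Int.gcd_eq_zero_iff]
    rintro ⟨h1, -⟩
    exact hl₀ h1
  have hGpos : 0 < G := lt_of_le_of_ne (Int.natCast_nonneg _) (Ne.symm hG0)
  have hdva : G ∣ a := Int.gcd_dvd_left a b
  have hdvb : G ∣ b := Int.gcd_dvd_right a b
  set a' : ℤ := a / G with ha'_def
  set b' : ℤ := b / G with hb'_def
  have ha' : a = G * a' := (Int.mul_ediv_cancel' hdva).symm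
  have hb'e : b = G * b' := (Int.mul_ediv_cancel' hdvb).symm
  have hcop : Int.gcd a' b' = 1 := by
    apply Int.gcd_div_gcd_div_gcd
    omega
  have hab' : a' • w₀ = b' • v := by
    have h1 : G • (a' • w₀) = G • (b' • v) := by
      rw [smul_smul, smul_smul, ← ha', ← hb'e, hab]
    exact smul_right_injective _ hG0 h1
  set x : ℤ := Int.gcdA a' b' with hx_def
  set y : ℤ := Int.gcdB a' b' with hy_def
  have hbez : a' * x + b' * y = 1 := by
    have := Int.gcd_eq_gcd_ab a' b'
    rw [hcop] at this
    exact_mod_cast this.symm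
  set u : Fin d → ℤ := x • v + y • w₀ with hu_def
  have hva' : v = a' • u := by
    have e1 : a' • u = (a' * x) • v + y • (a' • w₀) := by rw [hu_def]; module
    have e2 : (a' * x) • v + y • (b' • v) = (a' * x + b' * y) • v := by module
    rw [e1, hab', e2, hbez, one_smul]
  have hwb' : w₀ = b' • u := by
    have e1 : b' • u = x • (b' • v) + (b' * y) • w₀ := by rw [hu_def]; module
    have e2 : x • (a' • w₀) + (b' * y) • w₀ = (a' * x + b' * y) • w₀ := by module
    rw [e1, ← hab', e2, hbez, one_smul]
  have hua : IsUnit a' := hvp a' u hva'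
  have hub : IsUnit b' := hwp b' u hwb'
  -- signs : a * b > 0 hence a' = b' = ±1 with the same sign, so a' = b'
  have habpos : 0 < a * b := by
    rcases lt_or_gt_of_ne hl₀ with hneg | hpos
    · have hbneg : (b : ℝ) < 0 := by
        rw [hb]
        have : (a : ℝ) < 0 := by exact_mod_cast hneg
        nlinarith
      have : b < 0 := by exact_mod_cast hbneg
      exact mul_pos_of_neg_of_neg hneg this
    · have hbpos : (0 : ℝ) < b := by
        rw [hb]
        have : (0 : ℝ) < (a : ℝ) := by exact_mod_cast hpos
        nlinarith
      have : 0 < b := by exact_mod_cast hbpos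
      exact mul_pos hpos this
  have ha'b' : 0 < a' * b' := by
    have he : a * b = G * G * (a' * b') := by rw [ha', hb'e]; ring
    by_contra hc
    push_neg at hc
    nlinarith [mul_pos hGpos hGpos]
  have heq : a' = b' := by
    rcases Int.isUnit_iff.1 hua with h1 | h1 <;> rcases Int.isUnit_iff.1 hub with h2 | h2 <;>
      rw [h1, h2] at ha'b' ⊢ <;> omega
  rw [hwb', ← heq, ← hva']

end Aux
namespace Aux

variable {d : ℕ}

lemma initInv {F : Finset (Finset (Fin d → ℤ))} (hns : ∀ σ ∈ F, IsNsCone d σ)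
    (hgen : IsGenerable F) : Inv F := by
  refine ⟨fun σ hσ => indep_of_nsCone (hns σ hσ), ?_⟩
  intro σ hσ τ hτ
  obtain ⟨⟨t, ht, heq⟩, ⟨t', ht', heq'⟩⟩ :=
    hgen σ hσ τ hτ σ (le_refl σ) τ (le_refl τ)
  have hIσ : Indep σ := indep_of_nsCone (hns σ hσ)
  -- every element of t lies in τ
  have htτ : ∀ v ∈ t, v ∈ τ := by
    intro v hvt
    have hvσ : v ∈ σ := ht hvt
    have hx1 : (ic v : Fin d → ℝ) ∈ coneOf t' := by
      have h0 : (ic v : Fin d → ℝ) ∈ coneOf t := ic_mem_coneOf hvt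
      rw [← heq] at h0
      rwa [heq'] at h0
    obtain ⟨g, hg, hxg⟩ := mem_coneOf.mp hx1
    -- representation of each generator of t' over t
    have hrep : ∀ w : Fin d → ℤ, ∃ fw : (Fin d → ℤ) → ℝ, w ∈ t' →
        ((∀ u, 0 ≤ fw u) ∧ (ic w : Fin d → ℝ) = ∑ u ∈ t, fw u • ic u) := by
      intro w
      by_cases hw : w ∈ t'
      · have : (ic w : Fin d → ℝ) ∈ coneOf t := by
          have h0 : (ic w : Fin d → ℝ) ∈ coneOf t' := ic_mem_coneOf hw
          rw [← heq'] at h0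
          rwa [heq] at h0
        obtain ⟨fw, hfw, hfwe⟩ := mem_coneOf.mp this
        exact ⟨fw, fun _ => ⟨hfw, hfwe⟩⟩
      · exact ⟨fun _ => 0, fun h => absurd h hw⟩
    choose f hf using hrep
    -- combined representation of ic v over t
    have hcomb : (ic v : Fin d → ℝ)
        = ∑ u ∈ t, (∑ w ∈ t', g w * f w u) • ic u := by
      rw [hxg]
      calc ∑ w ∈ t', g w • ic w
          = ∑ w ∈ t', ∑ u ∈ t, (g w * f w u) • ic u := by
            refine Finset.sum_congr rfl fun w hw => ?_
            rw [(hf w hw).2, Finset.smul_sum]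
            exact Finset.sum_congr rfl fun u _ => smul_smul _ _ _
        _ = ∑ u ∈ t, ∑ w ∈ t', (g w * f w u) • ic u := Finset.sum_comm
        _ = ∑ u ∈ t, (∑ w ∈ t', g w * f w u) • ic u :=
            Finset.sum_congr rfl fun u _ => (Finset.sum_smul).symm
    have hterm := coeff_eq hIσ ht ht (fun u => if u = v then (1:ℝ) else 0)
      (fun u => ∑ w ∈ t', g w * f w u)
      (by rw [sum_indicator_smul hvt, one_smul, ← hcomb])
    have hv1 : (1 : ℝ) = ∑ w ∈ t', g w * f w v := by
      have := hterm v hvσ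
      rwa [if_pos hvt, if_pos hvt, if_pos rfl] at this
    obtain ⟨w₀, hw₀t', hw₀ne⟩ := Finset.exists_ne_zero_of_sum_ne_zero
      (f := fun w => g w * f w v) (s := t') (by rw [← hv1]; norm_num)
    have hfw₀ := hf w₀ hw₀t'
    have hg0 : 0 < g w₀ := by
      rcases lt_or_eq_of_le (hg w₀) with h | h
      · exact h
      · exact absurd (by rw [← h, zero_mul]) hw₀ne
    have hα : 0 < f w₀ v := by
      rcases lt_or_eq_of_le (hfw₀.1 v) with h | h
      · exact h
      · exact absurd (by rw [← h, mul_zero]) hw₀ne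
    have hzero : ∀ u ∈ t, u ≠ v → f w₀ u = 0 := by
      intro u hu hune
      have h0 : ∑ w ∈ t', g w * f w u = 0 := by
        have := hterm u (ht hu)
        rwa [if_pos hu, if_pos hu, if_neg hune, eq_comm] at this
      have := (Finset.sum_eq_zero_iff_of_nonneg
        (fun w _ => mul_nonneg (hg w) ((hf w ‹w ∈ t'›).1 u))).1 h0 w₀ hw₀t'
      · rcases mul_eq_zero.1 this with h | h
        · exact absurd h (ne_of_gt hg0)
        · exact h
    have hcollapse : (ic w₀ : Fin d → ℝ) = f w₀ v • ic v := by
      rw [hfw₀.2]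
      rw [Finset.sum_eq_single v (fun u hu hune => by rw [hzero u hu hune, zero_smul])
        (fun h => absurd hvt h)]
    have hv0 : v ≠ 0 := fun h => zero_not_mem_of_indep hIσ (h ▸ hvσ)
    have hw₀v := prim_eq (prim_of_nsCone (hns σ hσ) hvσ)
      (prim_of_nsCone (hns τ hτ) (ht' hw₀t')) hv0 (f w₀ v) hα hcollapse
    rw [← hw₀v]
    exact ht' hw₀t'
  rw [heq]
  exact coneOf_mono (Finset.subset_inter ht htτ)

end Aux
namespace Aux

variable {d : ℕ} {B : Matrix (Fin d) (Fin 2) ℤ}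

lemma main_descent (B : Matrix (Fin d) (Fin 2) ℤ) :
    ∀ (m n : ℕ) (F : Finset (Finset (Fin d → ℤ))), Inv F → muB B F = m → nuB B F = n →
    ∃ F' : Finset (Finset (Fin d → ℤ)),
      Relation.ReflTransGen (IsBGoodBlowUp B) F F' ∧ GoodFan B F' := by
  intro m
  induction m using Nat.strong_induction_on with
  | _ m ihm =>
  intro n
  induction n using Nat.strong_induction_on with
  | _ n ihn =>
  intro F hInv hm hn
  by_cases hgood : GoodFan B F
  · exact ⟨F, Relation.ReflTransGen.refl, hgood⟩
  · obtain ⟨ε₁, ε₂, h1, h2, hmax⟩ := exists_good_data hgood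
    have hstep : IsBGoodBlowUp B F (blowUp F ε₁ ε₂) := by
      refine ⟨ε₁, ε₂, hne12 h2, ?_, ?_, star12 h2, h1, h2, hmax, rfl⟩
      · exact edges_mono (Finset.filter_subset _ _) (mem_EB.1 h1).1
      · exact edges_mono (Finset.filter_subset _ _) (mem_EBe.1 h2).1.1
    have hInv₁ : Inv (blowUp F ε₁ ε₂) := inv_blowUp hInv (hne12 h2)
    rcases lt_or_eq_of_le (mu_blowUp_le h1 h2) with hlt | heq
    · obtain ⟨F', hRT, hgood'⟩ := ihm (muB B (blowUp F ε₁ ε₂)) (hm ▸ hlt)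
        (nuB B (blowUp F ε₁ ε₂)) (blowUp F ε₁ ε₂) hInv₁ rfl rfl
      exact ⟨F', Relation.ReflTransGen.head hstep hRT, hgood'⟩
    · have hnu := nu_blowUp_lt h1 h2 hmax hInv heq
      obtain ⟨F', hRT, hgood'⟩ := ihn (nuB B (blowUp F ε₁ ε₂)) (hn ▸ hnu)
        (blowUp F ε₁ ε₂) hInv₁ (heq.trans hm) rfl
      exact ⟨F', Relation.ReflTransGen.head hstep hRT, hgood'⟩

end Aux
/-- if `B` is not `Σ`-good, there is a series of `B`-good blow-ups
`Σ̃ ⇝ Σ` such that `B` is `Σ̃`-good. -/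
theorem stmt5 (d : ℕ) (F : Finset (Finset (Fin d → ℤ)))
    (hns : ∀ σ ∈ F, IsNsCone d σ) (hgen : IsGenerable F)
    (B : Matrix (Fin d) (Fin 2) ℤ) (hbad : ¬ GoodFan B F) :
    ∃ F' : Finset (Finset (Fin d → ℤ)),
      Relation.ReflTransGen (IsBGoodBlowUp B) F F' ∧ GoodFan B F' :=
  Aux.main_descent B (muB B F) (nuB B F) F (Aux.initInv hns hgen) rfl rfl
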